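/- Suppose for each vertex v in a finite set V, integer-valued nonnegative weights w^I(v) and w^S(v) satisfy the stochastic similarity condition P(w^S(v) = b) ≥ (1/c) · P(w^I(v) = b) for all integers b > 0 and some c ≥ 1, and the pairs (w^I(v), w^S(v)) are independent across distinct vertices v. Then for any graph G on V, E[OPT(w^S)] ≥ (1/c) · E[OPT(w^I)], where OPT(w) denotes the maximum weight of an independent set of G under weights w. -/

import Mathlib

open MeasureTheory ProbabilityTheory
open scoped ENNReal

/-- The maximum weight of an independent set of `G` under weights `w`. -/
def optN {V : Type*} [Fintype V] [DecidableEq V] (G : SimpleGraph V)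
    [DecidableRel G.Adj] (w : V → ℕ) : ℕ :=
  (Finset.univ : Finset V).powerset.sup fun S =>
    if ∀ u ∈ S, ∀ v ∈ S, ¬ G.Adj u v then ∑ v ∈ S, w v else 0

section Aux

variable {V : Type*} [Fintype V] [DecidableEq V] (G : SimpleGraph V) [DecidableRel G.Adj]

lemma optN_mono : Monotone (optN G) := by
  intro x y hxy
  refine Finset.sup_mono_fun fun S _ => ?_
  split
  · exact Finset.sum_le_sum fun v _ => hxy v
  · exact le_rfl

lemma sum_le_optN (x : V → ℕ) (U : Finset V) (hU : ∀ u ∈ U, ∀ v ∈ U, ¬ G.Adj u v) :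
    ∑ v ∈ U, x v ≤ optN G x := by
  have h := Finset.le_sup (f := fun S => if ∀ u ∈ S, ∀ v ∈ S, ¬ G.Adj u v then ∑ v ∈ S, x v else 0)
    (Finset.mem_powerset.2 (Finset.subset_univ U))
  rw [optN]
  simpa only [if_pos hU] using h

lemma optN_exists (x : V → ℕ) :
    ∃ U : Finset V, (∀ u ∈ U, ∀ v ∈ U, ¬ G.Adj u v) ∧ optN G x = ∑ v ∈ U, x v := by
  obtain ⟨U, -, hU⟩ := Finset.exists_mem_eq_sup (Finset.univ : Finset V).powerset
    (Finset.powerset_nonempty _)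
    (fun S => if ∀ u ∈ S, ∀ v ∈ S, ¬ G.Adj u v then ∑ v ∈ S, x v else 0)
  by_cases h : ∀ u ∈ U, ∀ v ∈ U, ¬ G.Adj u v
  · exact ⟨U, h, by rw [optN, hU, if_pos h]⟩
  · refine ⟨∅, by simp, ?_⟩
    rw [optN, hU, if_neg h]
    simp

/-- Restriction of a weight function to a subset of vertices (zero outside). -/
def maskW (S : Finset V) (x : V → ℕ) : V → ℕ := fun v => if v ∈ S then x v else 0

variable {G}

lemma coef_sum_mem (C : ℝ≥0∞) (hC : C⁻¹ ≤ 1) (v0 : V) :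
    ∑ S ∈ (Finset.univ : Finset V).powerset,
      (if v0 ∈ S then (∏ _v ∈ S, C⁻¹) * ∏ _v ∈ Sᶜ, (1 - C⁻¹) else 0) = C⁻¹ := by
  have huniv : (Finset.univ : Finset V) = insert v0 (Finset.univ.erase v0) :=
    (Finset.insert_erase (Finset.mem_univ v0)).symm
  rw [huniv, Finset.sum_powerset_insert (Finset.notMem_erase v0 _)]
  have h1 : ∀ t ∈ (Finset.univ.erase v0).powerset,
      (if v0 ∈ t then (∏ _v ∈ t, C⁻¹) * ∏ _v ∈ tᶜ, (1 - C⁻¹) else 0) = 0 := by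
    intro t ht
    have : v0 ∉ t := fun h =>
      Finset.notMem_erase v0 _ (Finset.mem_powerset.1 ht h)
    rw [if_neg this]
  rw [Finset.sum_congr rfl h1, Finset.sum_const_zero, zero_add]
  have h2 : ∀ t ∈ (Finset.univ.erase v0).powerset,
      (if v0 ∈ insert v0 t then (∏ _v ∈ insert v0 t, C⁻¹) * ∏ _v ∈ (insert v0 t)ᶜ, (1 - C⁻¹)
        else 0)
      = C⁻¹ * ((∏ _v ∈ t, C⁻¹) * ∏ _v ∈ (Finset.univ.erase v0) \ t, (1 - C⁻¹)) := by
    intro t ht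
    have hv0t : v0 ∉ t := fun h =>
      Finset.notMem_erase v0 _ (Finset.mem_powerset.1 ht h)
    have hcompl : (insert v0 t)ᶜ = (Finset.univ.erase v0) \ t := by
      ext w
      simp only [Finset.mem_compl, Finset.mem_insert, Finset.mem_sdiff, Finset.mem_erase,
        Finset.mem_univ, and_true, not_or]
      try tauto
    rw [if_pos (Finset.mem_insert_self v0 t), Finset.prod_insert hv0t, hcompl, mul_assoc]
  rw [Finset.sum_congr rfl h2, ← Finset.mul_sum, ← Finset.prod_add]
  have : C⁻¹ + (1 - C⁻¹) = 1 := add_tsub_cancel_of_le hC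
  rw [this, Finset.prod_const_one, mul_one]

lemma key_pointwise (C : ℝ≥0∞) (hC : C⁻¹ ≤ 1) (x : V → ℕ) :
    C⁻¹ * (optN G x : ℝ≥0∞) ≤
    ∑ S ∈ (Finset.univ : Finset V).powerset,
      ((∏ _v ∈ S, C⁻¹) * ∏ _v ∈ Sᶜ, (1 - C⁻¹)) * (optN G (maskW S x) : ℝ≥0∞) := by
  obtain ⟨U, hU, hval⟩ := optN_exists G x
  have step1 : ∀ S : Finset V,
      (∑ v ∈ U, (if v ∈ S then (x v : ℝ≥0∞) else 0)) ≤ (optN G (maskW S x) : ℝ≥0∞) := by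
    intro S
    have hsum : ∑ v ∈ U, (if v ∈ S then (x v : ℝ≥0∞) else 0)
        = ((∑ v ∈ U ∩ S, x v : ℕ) : ℝ≥0∞) := by
      push_cast
      rw [Finset.sum_ite_mem]
    have hmask : ∑ v ∈ U ∩ S, maskW S x v = ∑ v ∈ U ∩ S, x v :=
      Finset.sum_congr rfl fun v hv => by
        simp [maskW, (Finset.mem_inter.1 hv).2]
    have h2 := sum_le_optN G (maskW S x) (U ∩ S)
      (fun u hu v hv => hU u (Finset.mem_inter.1 hu).1 v (Finset.mem_inter.1 hv).1)
    rw [hmask] at h2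
    rw [hsum]
    exact_mod_cast h2
  calc C⁻¹ * (optN G x : ℝ≥0∞)
      = ∑ v ∈ U, C⁻¹ * (x v : ℝ≥0∞) := by
        rw [hval]; push_cast; rw [Finset.mul_sum]
    _ = ∑ v ∈ U, (∑ S ∈ (Finset.univ : Finset V).powerset,
          (if v ∈ S then (∏ _v ∈ S, C⁻¹) * ∏ _v ∈ Sᶜ, (1 - C⁻¹) else 0)) * (x v : ℝ≥0∞) := by
        refine Finset.sum_congr rfl fun v _ => ?_
        rw [coef_sum_mem C hC v]
    _ = ∑ S ∈ (Finset.univ : Finset V).powerset,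
          ((∏ _v ∈ S, C⁻¹) * ∏ _v ∈ Sᶜ, (1 - C⁻¹)) *
            ∑ v ∈ U, (if v ∈ S then (x v : ℝ≥0∞) else 0) := by
        simp_rw [Finset.sum_mul, Finset.mul_sum]
        rw [Finset.sum_comm]
        refine Finset.sum_congr rfl fun S _ => Finset.sum_congr rfl fun v _ => ?_
        split <;> simp
    _ ≤ _ := Finset.sum_le_sum fun S _ => mul_le_mul_right (step1 S) _

/-- One-dimensional comparison lemma. -/
lemma oneDim {m1 m2 : Measure ℕ} [IsProbabilityMeasure m1] [IsProbabilityMeasure m2]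
    (h : ∀ b : ℕ, 0 < b → m1 {b} ≤ m2 {b}) {g : ℕ → ℝ≥0∞} (hg : Monotone g) :
    ∫⁻ b, g b ∂m1 ≤ ∫⁻ b, g b ∂m2 := by
  have hmass : ∀ (m : Measure ℕ) [IsProbabilityMeasure m], ∑' b : ℕ, m {b} = 1 := by
    intro m _
    rw [← measure_iUnion (fun i j hij => Set.disjoint_singleton.2 hij)
      (fun b => measurableSet_singleton b), Set.iUnion_of_singleton]
    exact measure_univ
  have expand : ∀ (m : Measure ℕ) [IsProbabilityMeasure m],
      ∫⁻ b, g b ∂m = g 0 + ∑' b : ℕ, (g b - g 0) * m {b} := by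
    intro m _
    rw [lintegral_countable']
    have hterm : ∀ b : ℕ, g b * m {b} = g 0 * m {b} + (g b - g 0) * m {b} := by
      intro b
      rw [← add_mul, add_tsub_cancel_of_le (hg (Nat.zero_le b))]
    simp_rw [hterm]
    rw [ENNReal.tsum_add, ENNReal.tsum_mul_left, hmass m, mul_one]
  rw [expand m1, expand m2]
  refine add_le_add_right (ENNReal.tsum_le_tsum fun b => ?_) _
  rcases Nat.eq_zero_or_pos b with rfl | hb
  · simp
  · exact mul_le_mul_right (h b hb) _

lemma stepA (ρ q : V → Measure ℕ)
    [∀ v, IsProbabilityMeasure (ρ v)] [∀ v, IsProbabilityMeasure (q v)]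
    (h : ∀ v, ∀ b : ℕ, 0 < b → ρ v {b} ≤ q v {b})
    {f : (V → ℕ) → ℝ≥0∞} (hf : Monotone f) :
    ∫⁻ x, f x ∂Measure.pi ρ ≤ ∫⁻ x, f x ∂Measure.pi q := by
  have hfm : Measurable f := measurable_of_countable f
  have hmono : ∀ (m : V → Measure ℕ) (s : Finset V), Monotone (lmarginal m s f) := by
    intro m s x y hxy
    refine lintegral_mono fun z => hf fun v => ?_
    simp only [Function.updateFinset]
    split
    · exact le_rfl
    · exact hxy v
  have key : ∀ s : Finset V, ∀ x, lmarginal ρ s f x ≤ lmarginal q s f x := by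
    intro s
    induction s using Finset.induction with
    | empty => intro x; simp [lmarginal_empty]
    | @insert i s hi ih =>
      intro x
      rw [lmarginal_insert _ hfm hi, lmarginal_insert _ hfm hi]
      calc ∫⁻ b, lmarginal ρ s f (Function.update x i b) ∂ρ i
          ≤ ∫⁻ b, lmarginal q s f (Function.update x i b) ∂ρ i :=
            lintegral_mono fun b => ih _
        _ ≤ ∫⁻ b, lmarginal q s f (Function.update x i b) ∂q i := by
            refine oneDim (h i) fun b b' hbb' => hmono q s fun v => ?_
            by_cases hv : v = i
            · subst hv; simp [Function.update_self, hbb']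
            · simp [Function.update_of_ne hv]
  have h1 := lintegral_eq_lmarginal_univ (μ := ρ) (f := f) (fun _ => 0)
  have h2 := lintegral_eq_lmarginal_univ (μ := q) (f := f) (fun _ => 0)
  rw [h1, h2]
  exact key Finset.univ _

end Aux

theorem stmt4 {Ω V : Type*} [MeasurableSpace Ω] (μ : Measure Ω) [IsProbabilityMeasure μ]
    [Fintype V] [DecidableEq V] (G : SimpleGraph V) [DecidableRel G.Adj]
    (wI wS : V → Ω → ℕ) (c : ℝ) (hc : 1 ≤ c)
    (hmeasI : ∀ v, Measurable (wI v)) (hmeasS : ∀ v, Measurable (wS v))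
    (hsim : ∀ v : V, ∀ b : ℕ, 0 < b →
      μ {ω | wI v ω = b} ≤ ENNReal.ofReal c * μ {ω | wS v ω = b})
    (hindep : iIndepFun (fun v ω => (wI v ω, wS v ω)) μ) :
    ∫⁻ ω, (optN G (fun v => wI v ω) : ℝ≥0∞) ∂μ ≤
      ENNReal.ofReal c * ∫⁻ ω, (optN G (fun v => wS v ω) : ℝ≥0∞) ∂μ := by
  classical
  set C : ℝ≥0∞ := ENNReal.ofReal c with hCdef
  have hC1 : 1 ≤ C := by
    rw [hCdef, ← ENNReal.ofReal_one]
    exact ENNReal.ofReal_le_ofReal hc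
  have hC0 : C ≠ 0 := fun h => by simp [h] at hC1
  have hCtop : C ≠ ⊤ := ENNReal.ofReal_ne_top
  have hCinv : C⁻¹ ≤ 1 := ENNReal.inv_le_one.2 hC1
  have hCC : C⁻¹ * C = 1 := ENNReal.inv_mul_cancel hC0 hCtop
  -- marginal laws
  set p : V → Measure ℕ := fun v => μ.map (wI v) with hpdef
  set q : V → Measure ℕ := fun v => μ.map (wS v) with hqdef
  haveI hpP : ∀ v, IsProbabilityMeasure (p v) :=
    fun v => Measure.isProbabilityMeasure_map (hmeasI v).aemeasurable
  haveI hqP : ∀ v, IsProbabilityMeasure (q v) :=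
    fun v => Measure.isProbabilityMeasure_map (hmeasS v).aemeasurable
  set ρ : V → Measure ℕ := fun v => C⁻¹ • p v + (1 - C⁻¹) • Measure.dirac (0 : ℕ) with hρdef
  haveI hρP : ∀ v, IsProbabilityMeasure (ρ v) := by
    intro v
    constructor
    rw [hρdef]
    simp only [Measure.add_apply, Measure.smul_apply, smul_eq_mul, measure_univ, mul_one]
    exact add_tsub_cancel_of_le hCinv
  -- the weight vector maps
  set WI : Ω → V → ℕ := fun ω v => wI v ω with hWIdef
  set WS : Ω → V → ℕ := fun ω v => wS v ω with hWSdef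
  have hWIm : Measurable WI := measurable_pi_lambda _ hmeasI
  have hWSm : Measurable WS := measurable_pi_lambda _ hmeasS
  set f : (V → ℕ) → ℝ≥0∞ := fun x => ((optN G x : ℕ) : ℝ≥0∞) with hfdef
  have hfmono : Monotone f := fun x y hxy => by
    exact_mod_cast Nat.cast_le.2 (optN_mono G hxy)
  have hfm : Measurable f := measurable_of_countable f
  -- laws of the weight vectors are product measures
  have hmapI : Measure.pi p = μ.map WI := by
    refine Measure.pi_eq fun s hs => ?_
    rw [Measure.map_apply hWIm (MeasurableSet.univ_pi hs)]
    have hpre : WI ⁻¹' Set.pi Set.univ s = ⋂ v, wI v ⁻¹' s v := by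
      ext ω; simp [Set.mem_pi, hWIdef]
    have hI := hindep.comp (fun _ => Prod.fst) (fun _ => measurable_fst)
    have := hI.measure_inter_preimage_eq_mul (S := Finset.univ) (sets := s)
      (fun i _ => hs i)
    rw [hpre]
    calc μ (⋂ v, wI v ⁻¹' s v) = μ (⋂ v ∈ Finset.univ, wI v ⁻¹' s v) := by
          simp
      _ = ∏ v ∈ Finset.univ, μ (wI v ⁻¹' s v) := this
      _ = ∏ v, p v (s v) := by
          refine Finset.prod_congr rfl fun v _ => ?_
          rw [hpdef]
          exact (Measure.map_apply (hmeasI v) (hs v)).symm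
  have hmapS : Measure.pi q = μ.map WS := by
    refine Measure.pi_eq fun s hs => ?_
    rw [Measure.map_apply hWSm (MeasurableSet.univ_pi hs)]
    have hpre : WS ⁻¹' Set.pi Set.univ s = ⋂ v, wS v ⁻¹' s v := by
      ext ω; simp [Set.mem_pi, hWSdef]
    have hI := hindep.comp (fun _ => Prod.snd) (fun _ => measurable_snd)
    have := hI.measure_inter_preimage_eq_mul (S := Finset.univ) (sets := s)
      (fun i _ => hs i)
    rw [hpre]
    calc μ (⋂ v, wS v ⁻¹' s v) = μ (⋂ v ∈ Finset.univ, wS v ⁻¹' s v) := by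
          simp
      _ = ∏ v ∈ Finset.univ, μ (wS v ⁻¹' s v) := this
      _ = ∏ v, q v (s v) := by
          refine Finset.prod_congr rfl fun v _ => ?_
          rw [hqdef]
          exact (Measure.map_apply (hmeasS v) (hs v)).symm
  -- rewrite both sides as integrals over product measures
  have hLHS : ∫⁻ ω, (optN G (fun v => wI v ω) : ℝ≥0∞) ∂μ = ∫⁻ x, f x ∂Measure.pi p := by
    rw [hmapI, lintegral_map hfm hWIm]
  have hRHS : ∫⁻ ω, (optN G (fun v => wS v ω) : ℝ≥0∞) ∂μ = ∫⁻ x, f x ∂Measure.pi q := by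
    rw [hmapS, lintegral_map hfm hWSm]
  rw [hLHS, hRHS]
  -- Step A : ∫ f dπρ ≤ ∫ f dπq
  have hA : ∫⁻ x, f x ∂Measure.pi ρ ≤ ∫⁻ x, f x ∂Measure.pi q := by
    refine stepA ρ q (fun v b hb => ?_) hfmono
    have hd : Measure.dirac (0 : ℕ) {b} = 0 := by
      rw [Measure.dirac_apply' _ (measurableSet_singleton b)]
      simp only [Set.indicator_apply, Set.mem_singleton_iff]
      rw [if_neg (by omega)]
    have hpb : p v {b} = μ {ω | wI v ω = b} := by
      rw [hpdef, Measure.map_apply (hmeasI v) (measurableSet_singleton b)]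
      rfl
    have hqb : q v {b} = μ {ω | wS v ω = b} := by
      rw [hqdef, Measure.map_apply (hmeasS v) (measurableSet_singleton b)]
      rfl
    calc ρ v {b} = C⁻¹ * p v {b} := by
          rw [hρdef]
          simp only [Measure.add_apply, Measure.smul_apply, smul_eq_mul, hd, mul_zero, add_zero]
      _ ≤ C⁻¹ * (C * q v {b}) := by
          refine mul_le_mul_right ?_ _
          rw [hpb, hqb]; exact hsim v b hb
      _ = q v {b} := by rw [← mul_assoc, hCC, one_mul]
  -- Step B : C⁻¹ * ∫ f dπp ≤ ∫ f dπρ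
  set mix : Finset V → V → Measure ℕ :=
    fun S v => if v ∈ S then p v else Measure.dirac (0 : ℕ) with hmixdef
  haveI hmixP : ∀ S v, IsProbabilityMeasure (mix S v) := by
    intro S v
    rw [hmixdef]
    dsimp only
    split
    · exact hpP v
    · infer_instance
  set coef : Finset V → ℝ≥0∞ :=
    fun S => (∏ _v ∈ S, C⁻¹) * ∏ _v ∈ Sᶜ, (1 - C⁻¹) with hcoefdef
  have hmix : Measure.pi ρ =
      ∑ S ∈ (Finset.univ : Finset V).powerset, coef S • Measure.pi (mix S) := by
    refine Measure.pi_eq fun s hs => ?_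
    rw [Measure.finset_sum_apply]
    have hterm : ∀ S ∈ (Finset.univ : Finset V).powerset,
        (coef S • Measure.pi (mix S)) (Set.pi Set.univ s)
        = (∏ v ∈ S, C⁻¹ * p v (s v)) * ∏ v ∈ Sᶜ, (1 - C⁻¹) * Measure.dirac (0 : ℕ) (s v) := by
      intro S _
      rw [Measure.smul_apply, smul_eq_mul, Measure.pi_pi]
      have hsplit : ∏ v, mix S v (s v)
          = (∏ v ∈ S, p v (s v)) * ∏ v ∈ Sᶜ, Measure.dirac (0 : ℕ) (s v) := by
        rw [← Finset.prod_mul_prod_compl S (fun v => mix S v (s v))]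
        congr 1
        · exact Finset.prod_congr rfl fun v hv => by rw [hmixdef]; simp [hv]
        · exact Finset.prod_congr rfl fun v hv => by
            rw [hmixdef]; simp [Finset.mem_compl.1 hv]
      rw [hsplit, hcoefdef]
      dsimp only
      rw [mul_mul_mul_comm, ← Finset.prod_mul_distrib, ← Finset.prod_mul_distrib]
    rw [Finset.sum_congr rfl hterm]
    symm
    have hρs : ∀ v, ρ v (s v) = C⁻¹ * p v (s v) + (1 - C⁻¹) * Measure.dirac (0 : ℕ) (s v) := by
      intro v
      rw [hρdef]
      simp [Measure.add_apply, Measure.smul_apply, smul_eq_mul]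
    calc ∏ v, ρ v (s v)
        = ∏ v, (C⁻¹ * p v (s v) + (1 - C⁻¹) * Measure.dirac (0 : ℕ) (s v)) :=
          Finset.prod_congr rfl fun v _ => hρs v
      _ = ∑ S ∈ (Finset.univ : Finset V).powerset,
            (∏ v ∈ S, C⁻¹ * p v (s v)) *
              ∏ v ∈ Finset.univ \ S, (1 - C⁻¹) * Measure.dirac (0 : ℕ) (s v) :=
          Finset.prod_add _ _ _
      _ = _ := by
          refine (Finset.sum_congr rfl fun S _ => ?_).symm
          rw [Finset.compl_eq_univ_sdiff]
  have hmask : ∀ S : Finset V, Measure.pi (mix S) = (Measure.pi p).map (maskW S) := by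
    intro S
    refine Measure.pi_eq fun s hs => ?_
    rw [Measure.map_apply (measurable_of_countable _) (MeasurableSet.univ_pi hs)]
    have hpre : (maskW S) ⁻¹' Set.pi Set.univ s
        = Set.pi Set.univ (fun v => if v ∈ S then s v
            else (if (0 : ℕ) ∈ s v then Set.univ else ∅)) := by
      ext x
      simp only [Set.mem_preimage, Set.mem_pi, Set.mem_univ, true_implies, maskW]
      refine forall_congr' fun v => ?_
      by_cases hv : v ∈ S
      · simp [hv]
      · by_cases h0 : (0 : ℕ) ∈ s v <;> simp [hv, h0]
    rw [hpre, Measure.pi_pi]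
    refine Finset.prod_congr rfl fun v _ => ?_
    by_cases hv : v ∈ S
    · rw [hmixdef]; simp [hv]
    · rw [hmixdef]
      simp only [hv, if_false]
      rw [Measure.dirac_apply' _ (hs v)]
      by_cases h0 : (0 : ℕ) ∈ s v <;> simp [h0]
  have hB : C⁻¹ * ∫⁻ x, f x ∂Measure.pi p ≤ ∫⁻ x, f x ∂Measure.pi ρ := by
    rw [hmix, lintegral_finset_sum_measure]
    have heach : ∀ S : Finset V,
        ∫⁻ x, f x ∂(coef S • Measure.pi (mix S))
        = ∫⁻ x, coef S * f (maskW S x) ∂Measure.pi p := by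
      intro S
      rw [lintegral_smul_measure, hmask S, lintegral_map hfm (measurable_of_countable _)]
      exact (lintegral_const_mul (coef S)
        (measurable_of_countable (fun a => f (maskW S a)))).symm
    rw [Finset.sum_congr rfl fun S _ => heach S, ← lintegral_finset_sum]
    swap
    · exact fun S _ => (measurable_const.mul (hfm.comp (measurable_of_countable _)))
    calc C⁻¹ * ∫⁻ x, f x ∂Measure.pi p
        = ∫⁻ x, C⁻¹ * f x ∂Measure.pi p := (lintegral_const_mul _ hfm).symm
      _ ≤ _ := by
          refine lintegral_mono fun x => ?_
          have := key_pointwise (G := G) C hCinv x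
          simpa [hcoefdef, hfdef] using this
  -- combine
  calc ∫⁻ x, f x ∂Measure.pi p
      = C * (C⁻¹ * ∫⁻ x, f x ∂Measure.pi p) := by
        rw [← mul_assoc, ENNReal.mul_inv_cancel hC0 hCtop, one_mul]
    _ ≤ C * ∫⁻ x, f x ∂Measure.pi ρ := mul_le_mul_right hB _
    _ ≤ C * ∫⁻ x, f x ∂Measure.pi q := mul_le_mul_right hA _
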